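/- If Ġ = (G,σ) is a connected signed graph, then λ₁(Ġ) ≤ λ₁(G), with equality if and only if Ġ is balanced. -/

import Mathlib

open Matrix

/-- The signed adjacency matrix of a signed graph `(G, σ)`. -/
def signedAdj {V : Type*} (G : SimpleGraph V) [DecidableRel G.Adj]
    (σ : V → V → ℝ) : Matrix V V ℝ :=
  fun u v => if G.Adj u v then σ u v else 0

/-- The product of the edge signs along a walk in a signed graph. -/
def walkSign {V : Type*} {G : SimpleGraph V} (σ : V → V → ℝ) {u v : V} (w : G.Walk u v) : ℝ :=
  (w.darts.map fun d => σ d.toProd.1 d.toProd.2).prod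

/-- A signed graph is balanced if every cycle has edge-sign product `1`. -/
def IsBalanced {V : Type*} (G : SimpleGraph V) (σ : V → V → ℝ) : Prop :=
  ∀ (v : V) (w : G.Walk v v), w.IsCycle → walkSign σ w = 1

section WalkLemmas

set_option linter.unusedSectionVars false

variable {V : Type*} [DecidableEq V] {G : SimpleGraph V} {σ : V → V → ℝ}

@[simp] lemma walkSign_nil {v : V} :
    walkSign σ (SimpleGraph.Walk.nil : G.Walk v v) = 1 := rfl

@[simp] lemma walkSign_cons {u v w : V} (h : G.Adj u v) (p : G.Walk v w) :
    walkSign σ (SimpleGraph.Walk.cons h p) = σ u v * walkSign σ p := by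
  simp [walkSign]

lemma walkSign_append {u v w : V} (p : G.Walk u v) (q : G.Walk v w) :
    walkSign σ (p.append q) = walkSign σ p * walkSign σ q := by
  simp [walkSign, SimpleGraph.Walk.darts_append]

lemma walkSign_pm (hσsign : ∀ u v, G.Adj u v → σ u v = 1 ∨ σ u v = -1)
    {u v : V} (w : G.Walk u v) : walkSign σ w = 1 ∨ walkSign σ w = -1 := by
  induction w with
  | nil => simp
  | cons h p ih =>
    rcases hσsign _ _ h with h1 | h1 <;> rcases ih with h2 | h2 <;>
      simp [h1, h2]

lemma walkSign_mul_self (hσsign : ∀ u v, G.Adj u v → σ u v = 1 ∨ σ u v = -1)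
    {u v : V} (w : G.Walk u v) : walkSign σ w * walkSign σ w = 1 := by
  rcases walkSign_pm hσsign w with h | h <;> rw [h] <;> norm_num

lemma walkSign_reverse (hσsymm : ∀ u v, σ u v = σ v u) {u v : V} (w : G.Walk u v) :
    walkSign σ w.reverse = walkSign σ w := by
  induction w with
  | nil => simp
  | cons h p ih =>
    rw [SimpleGraph.Walk.reverse_cons, walkSign_append, ih, walkSign_cons]
    simp [walkSign, hσsymm _ _]
    ring

lemma walkSign_eq_of_switch {s : V → ℝ} (hs : ∀ v, s v * s v = 1)
    (hedge : ∀ u v, G.Adj u v → σ u v = s u * s v) {u v : V} (w : G.Walk u v) :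
    walkSign σ w = s u * s v := by
  induction w with
  | nil => exact (hs _).symm
  | @cons a b c h p ih =>
    rw [walkSign_cons, hedge _ _ h, ih]
    calc s a * s b * (s b * s c) = s a * (s b * s b) * s c := by ring
    _ = s a * s c := by rw [hs b]; ring

/-- a closed walk with nodup support is nil -/
lemma nil_of_closed_nodup {u : V} (q : G.Walk u u) (hq : q.support.Nodup) :
    q = SimpleGraph.Walk.nil := by
  cases q with
  | nil => rfl
  | cons h r =>
    exfalso
    rw [SimpleGraph.Walk.support_cons, List.nodup_cons] at hq
    exact hq.1 r.end_mem_support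

lemma walkSign_rotate {u v : V} (c : G.Walk v v) (h : u ∈ c.support) :
    walkSign σ (c.rotate u h) = walkSign σ c := by
  unfold walkSign
  exact ((c.rotate_darts u h).perm.map _).prod_eq

/-- In a balanced signed graph, every closed walk has sign `1`. -/
lemma closed_walkSign (hσsymm : ∀ u v, σ u v = σ v u)
    (hσsign : ∀ u v, G.Adj u v → σ u v = 1 ∨ σ u v = -1)
    (hbal : IsBalanced G σ) :
    ∀ (n : ℕ) ⦃v : V⦄ (w : G.Walk v v), w.length ≤ n → walkSign σ w = 1 := by
  intro n
  induction n with
  | zero =>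
    intro v w hw
    rw [Nat.le_zero, SimpleGraph.Walk.length_eq_zero_iff, SimpleGraph.Walk.nil_iff_eq_nil] at hw
    subst hw; simp
  | succ n ih =>
    intro v w hw
    classical
    cases w with
    | nil => simp
    | @cons _ u _ h p =>
      rw [SimpleGraph.Walk.length_cons] at hw
      have hv : v ∈ p.support := p.end_mem_support
      by_cases hnil : (p.dropUntil v hv).length = 0
      · -- v occurs only at the end of p
        have hdnil : p.dropUntil v hv = SimpleGraph.Walk.nil :=
          SimpleGraph.Walk.nil_iff_eq_nil.mp ((SimpleGraph.Walk.length_eq_zero_iff).mp hnil)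
        have hcount : p.support.count v = 1 := by
          conv_lhs => rw [← p.take_spec hv]
          rw [SimpleGraph.Walk.support_append, hdnil]
          simpa using p.count_support_takeUntil_eq_one hv
        by_cases hnd : p.support.Nodup
        · -- p is a path
          by_cases he : s(v, u) ∈ p.edges
          · -- the edge is in the path: forces p to be the single edge u-v
            cases p with
            | nil => exact absurd rfl h.ne
            | @cons _ b _ h' q =>
              rw [SimpleGraph.Walk.edges_cons, List.mem_cons] at he
              rcases he with he | he
              · -- s(v,u) = s(u,b), so v = b
                have hvb : v = b := by
                  rw [Sym2.eq_iff] at he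
                  rcases he with ⟨h1, h2⟩ | ⟨h1, h2⟩
                  · exact absurd h1 h.ne
                  · exact h1
                subst hvb
                have hqnil : q = SimpleGraph.Walk.nil := by
                  apply nil_of_closed_nodup
                  rw [SimpleGraph.Walk.support_cons, List.nodup_cons] at hnd
                  exact hnd.2
                subst hqnil
                rcases hσsign v u h with h1 | h1 <;> simp [h1, hσsymm u v]
              · -- edge inside q: contradicts nodup
                exfalso
                have : u ∈ q.support := q.snd_mem_support_of_mem_edges he
                rw [SimpleGraph.Walk.support_cons, List.nodup_cons] at hnd
                exact hnd.1 this
          · -- it's a cycle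
            exact hbal v (SimpleGraph.Walk.cons h p)
              ((SimpleGraph.Walk.cons_isCycle_iff p h).mpr
                ⟨(SimpleGraph.Walk.isPath_def p).mpr hnd, he⟩)
        · -- duplicate vertex a ≠ v inside p: rotate and split
          obtain ⟨a, ha⟩ : ∃ a, 2 ≤ p.support.count a := by
            by_contra hcon
            push_neg at hcon
            exact hnd (List.nodup_iff_count_le_one.mpr fun a => by
              have := hcon a; omega)
          have hax : a ∈ p.support := by
            rw [← List.count_pos_iff]; omega
          have haw : a ∈ (SimpleGraph.Walk.cons h p).support := by
            rw [SimpleGraph.Walk.support_cons]; exact List.mem_cons_of_mem _ hax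
          set w := SimpleGraph.Walk.cons h p with hwdef
          have hsign := walkSign_rotate (σ := σ) w haw
          have hlenrot : (w.rotate a haw).length = w.length := by
            rw [SimpleGraph.Walk.rotate, SimpleGraph.Walk.length_append, add_comm,
              ← SimpleGraph.Walk.length_append, w.take_spec haw]
          have hcount' : 2 ≤ (w.rotate a haw).support.tail.count a := by
            rw [List.Perm.count_eq ((w.support_rotate a haw).perm)]
            rw [SimpleGraph.Walk.support_cons, List.tail_cons]
            exact ha
          cases hrot : w.rotate a haw with
          | nil => rw [hrot] at hcount'; simp at hcount'
          | @cons _ c _ h3 p3 =>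
            rw [hrot] at hcount' hsign hlenrot
            rw [SimpleGraph.Walk.support_cons, List.tail_cons] at hcount'
            have ha3 : a ∈ p3.support := by
              rw [← List.count_pos_iff]; omega
            have h5nil : (p3.dropUntil a ha3).length ≠ 0 := by
              intro h0
              have hd3 : p3.dropUntil a ha3 = SimpleGraph.Walk.nil :=
                SimpleGraph.Walk.nil_iff_eq_nil.mp ((SimpleGraph.Walk.length_eq_zero_iff).mp h0)
              have : p3.support.count a = 1 := by
                conv_lhs => rw [← p3.take_spec ha3]
                rw [SimpleGraph.Walk.support_append, hd3]
                simpa using p3.count_support_takeUntil_eq_one ha3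
              omega
            have hlen3 : (p3.takeUntil a ha3).length + (p3.dropUntil a ha3).length
                = p3.length := by
              rw [← SimpleGraph.Walk.length_append, p3.take_spec ha3]
            have hlen4 : p3.length + 1 = p.length + 1 := by
              have hwl : w.length = p.length + 1 := by
                rw [hwdef, SimpleGraph.Walk.length_cons]
              rw [SimpleGraph.Walk.length_cons] at hlenrot
              omega
            have e1 : walkSign σ (SimpleGraph.Walk.cons h3 (p3.takeUntil a ha3)) = 1 := by
              apply ih
              rw [SimpleGraph.Walk.length_cons]
              omega
            have e2 : walkSign σ (p3.dropUntil a ha3) = 1 := by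
              apply ih
              omega
            rw [← hsign]
            conv_lhs => rw [← p3.take_spec ha3]
            rw [walkSign_cons, walkSign_append, ← mul_assoc, ← walkSign_cons h3, e1, e2, mul_one]
      · -- v occurs inside p: split directly
        have hlen2 : (p.takeUntil v hv).length + (p.dropUntil v hv).length = p.length := by
          rw [← SimpleGraph.Walk.length_append, p.take_spec hv]
        have e1 : walkSign σ (SimpleGraph.Walk.cons h (p.takeUntil v hv)) = 1 := by
          apply ih
          rw [SimpleGraph.Walk.length_cons]
          omega
        have e2 : walkSign σ (p.dropUntil v hv) = 1 := by
          apply ih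
          omega
        conv_lhs => rw [← p.take_spec hv]
        rw [walkSign_cons, walkSign_append, ← mul_assoc, ← walkSign_cons h, e1, e2, mul_one]

end WalkLemmas

section LA

set_option linter.unusedSectionVars false

variable {V : Type*} [Fintype V] [DecidableEq V] [Nonempty V]

lemma sSup_mem_spectrum (B : Matrix V V ℝ) (hB : B.IsHermitian) :
    sSup (spectrum ℝ B) ∈ spectrum ℝ B := by
  rw [hB.spectrum_real_eq_range_eigenvalues]
  exact Set.Nonempty.csSup_mem (Set.range_nonempty _) (Set.finite_range _)

lemma exists_eigvec (B : Matrix V V ℝ) (hB : B.IsHermitian) {c : ℝ}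
    (hc : c ∈ spectrum ℝ B) : ∃ x : V → ℝ, x ≠ 0 ∧ B *ᵥ x = c • x := by
  rw [hB.spectrum_real_eq_range_eigenvalues] at hc
  obtain ⟨i, rfl⟩ := hc
  refine ⟨hB.eigenvectorBasis i, ?_, hB.mulVec_eigenvectorBasis i⟩
  have := hB.eigenvectorBasis.orthonormal.ne_zero i
  simpa using this

lemma shift_mem_spectrum (B : Matrix V V ℝ) {c ν : ℝ}
    (hν : ν ∈ spectrum ℝ (c • (1 : Matrix V V ℝ) - B)) : c - ν ∈ spectrum ℝ B := by
  rw [spectrum.mem_iff] at hν ⊢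
  intro hu
  apply hν
  have h1 : (algebraMap ℝ (Matrix V V ℝ)) ν - (c • 1 - B)
      = -((algebraMap ℝ (Matrix V V ℝ)) (c - ν) - B) := by
    rw [Algebra.algebraMap_eq_smul_one, Algebra.algebraMap_eq_smul_one]
    module
  rw [h1]
  exact hu.neg

lemma sSup_smul_one_sub_posSemidef (B : Matrix V V ℝ) (hB : B.IsHermitian) :
    (sSup (spectrum ℝ B) • (1 : Matrix V V ℝ) - B).PosSemidef := by
  set c := sSup (spectrum ℝ B) with hc
  have hC : (c • (1 : Matrix V V ℝ) - B).IsHermitian := by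
    apply Matrix.IsHermitian.sub _ hB
    show (c • (1 : Matrix V V ℝ))ᴴ = _
    rw [conjTranspose_smul, conjTranspose_one, star_trivial]
  apply hC.posSemidef_iff_eigenvalues_nonneg.mpr
  intro i
  have h1 := hC.eigenvalues_mem_spectrum_real i
  have h2 := shift_mem_spectrum B h1
  have h3 : c - hC.eigenvalues i ≤ c := by
    apply le_csSup _ h2
    rw [hB.spectrum_real_eq_range_eigenvalues]
    exact (Set.finite_range _).bddAbove
  rw [Pi.zero_apply]
  linarith

lemma herm_dot_mulVec_le (B : Matrix V V ℝ) (hB : B.IsHermitian) (x : V → ℝ) :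
    x ⬝ᵥ B *ᵥ x ≤ sSup (spectrum ℝ B) * (x ⬝ᵥ x) := by
  have hPSD := sSup_smul_one_sub_posSemidef B hB
  have h0 := hPSD.dotProduct_mulVec_nonneg x
  rw [star_trivial, sub_mulVec, dotProduct_sub, smul_mulVec, one_mulVec,
    dotProduct_smul, smul_eq_mul] at h0
  linarith

lemma herm_eig_of_dot_eq (B : Matrix V V ℝ) (hB : B.IsHermitian) (x : V → ℝ)
    (h : x ⬝ᵥ B *ᵥ x = sSup (spectrum ℝ B) * (x ⬝ᵥ x)) :
    B *ᵥ x = sSup (spectrum ℝ B) • x := by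
  have hPSD := sSup_smul_one_sub_posSemidef B hB
  have h0 : star x ⬝ᵥ (sSup (spectrum ℝ B) • (1 : Matrix V V ℝ) - B) *ᵥ x = 0 := by
    rw [star_trivial, sub_mulVec, dotProduct_sub, smul_mulVec, one_mulVec,
      dotProduct_smul, smul_eq_mul, h, sub_self]
  have h1 := (hPSD.dotProduct_mulVec_zero_iff x).mp h0
  rw [sub_mulVec, sub_eq_zero, smul_mulVec, one_mulVec] at h1
  exact h1.symm

lemma dot_expand (M : Matrix V V ℝ) (z : V → ℝ) :
    z ⬝ᵥ M *ᵥ z = ∑ p : V × V, z p.1 * M p.1 p.2 * z p.2 := by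
  rw [Fintype.sum_prod_type]
  simp only [dotProduct, mulVec, dotProduct, Finset.mul_sum]
  apply Finset.sum_congr rfl
  intro u _
  apply Finset.sum_congr rfl
  intro v _
  ring

end LA

/-- For a connected signed graph `(G, σ)`, the largest eigenvalue of the signed adjacency
matrix is at most the largest eigenvalue of the adjacency matrix of the underlying graph,
with equality if and only if the signed graph is balanced. -/
theorem signed_index_le_underlying_index {V : Type*} [Fintype V] [DecidableEq V]
    (G : SimpleGraph V) [DecidableRel G.Adj] (σ : V → V → ℝ)
    (hσsymm : ∀ u v, σ u v = σ v u)
    (hσsign : ∀ u v, G.Adj u v → σ u v = 1 ∨ σ u v = -1)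
    (hconn : G.Connected) :
    sSup (spectrum ℝ (signedAdj G σ)) ≤ sSup (spectrum ℝ (G.adjMatrix ℝ)) ∧
      (sSup (spectrum ℝ (signedAdj G σ)) = sSup (spectrum ℝ (G.adjMatrix ℝ)) ↔
        IsBalanced G σ) := by
  classical
  have hne : Nonempty V := hconn.nonempty
  have hSherm : (signedAdj G σ).IsHermitian := by
    show (signedAdj G σ)ᴴ = _
    ext i j
    simp only [conjTranspose_apply, signedAdj, star_trivial]
    by_cases hadj : G.Adj j i
    · rw [if_pos hadj, if_pos hadj.symm, hσsymm]
    · rw [if_neg hadj, if_neg fun hc => hadj hc.symm]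
  have hAherm : (G.adjMatrix ℝ).IsHermitian := by
    show (G.adjMatrix ℝ)ᴴ = _
    ext i j
    simp only [conjTranspose_apply, SimpleGraph.adjMatrix_apply, star_trivial]
    by_cases hadj : G.Adj j i
    · rw [if_pos hadj, if_pos hadj.symm]
    · rw [if_neg hadj, if_neg fun hc => hadj hc.symm]
  set cS := sSup (spectrum ℝ (signedAdj G σ)) with hcS
  set cG := sSup (spectrum ℝ (G.adjMatrix ℝ)) with hcG
  obtain ⟨x, hx0, hxe⟩ := exists_eigvec _ hSherm (sSup_mem_spectrum _ hSherm)
  have hxx : 0 < x ⬝ᵥ x := by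
    obtain ⟨i, hi⟩ := Function.ne_iff.mp hx0
    apply Finset.sum_pos' (fun v _ => mul_self_nonneg (x v))
    exact ⟨i, Finset.mem_univ i, mul_self_pos.mpr hi⟩
  set y : V → ℝ := fun v => |x v| with hy
  have hyy : y ⬝ᵥ y = x ⬝ᵥ x := by
    simp [dotProduct, hy, abs_mul_abs_self]
  have key1 : x ⬝ᵥ (signedAdj G σ) *ᵥ x = cS * (x ⬝ᵥ x) := by
    rw [hxe, dotProduct_smul, smul_eq_mul]
  have hterm : ∀ p : V × V,
      x p.1 * signedAdj G σ p.1 p.2 * x p.2 ≤ y p.1 * G.adjMatrix ℝ p.1 p.2 * y p.2 := by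
    rintro ⟨u, v⟩
    by_cases hadj : G.Adj u v
    · have hS : signedAdj G σ u v = σ u v := if_pos hadj
      have hA : (G.adjMatrix ℝ) u v = 1 := by simp [hadj]
      rw [hS, hA]
      have habs : y u * 1 * y v = |x u * x v| := by
        rw [mul_one, hy, abs_mul]
      rw [habs]
      rcases hσsign u v hadj with h1 | h1 <;> rw [h1]
      · simpa using le_abs_self (x u * x v)
      · have := neg_abs_le (x u * x v)
        nlinarith [abs_nonneg (x u * x v)]
    · have hS : signedAdj G σ u v = 0 := if_neg hadj
      have hA : (G.adjMatrix ℝ) u v = 0 := by simp [hadj]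
      rw [hS, hA]
      simp
  have key2 : x ⬝ᵥ (signedAdj G σ) *ᵥ x ≤ y ⬝ᵥ (G.adjMatrix ℝ) *ᵥ y := by
    rw [dot_expand, dot_expand]
    exact Finset.sum_le_sum fun p _ => hterm p
  have key3 : y ⬝ᵥ (G.adjMatrix ℝ) *ᵥ y ≤ cG * (x ⬝ᵥ x) := by
    rw [← hyy]
    exact herm_dot_mulVec_le _ hAherm y
  have hineq : cS ≤ cG := by
    have h5 := key1 ▸ key2.trans key3
    exact le_of_mul_le_mul_right h5 hxx
  refine ⟨hineq, ?_, ?_⟩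
  · -- equality → balanced
    intro heq
    have e2 : x ⬝ᵥ (signedAdj G σ) *ᵥ x = y ⬝ᵥ (G.adjMatrix ℝ) *ᵥ y := by
      refine le_antisymm key2 ?_
      rw [key1, heq]
      exact key3
    have e3 : y ⬝ᵥ (G.adjMatrix ℝ) *ᵥ y = cG * (y ⬝ᵥ y) := by
      rw [hyy, ← e2, key1, heq]
    have hyeig : (G.adjMatrix ℝ) *ᵥ y = cG • y := herm_eig_of_dot_eq _ hAherm y e3
    have hxne : ∀ v, x v ≠ 0 := by
      have spread : ∀ {a b : V} (w : G.Walk a b), x a = 0 → x b = 0 := by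
        intro a b w
        induction w with
        | nil => exact id
        | @cons a' b' c' hadj p ih =>
          intro ha0
          apply ih
          have h4 : ((G.adjMatrix ℝ) *ᵥ y) a' = 0 := by
            rw [hyeig]
            simp [hy, ha0]
          rw [SimpleGraph.adjMatrix_mulVec_apply] at h4
          have h7 := (Finset.sum_eq_zero_iff_of_nonneg
            (fun t _ => abs_nonneg (x t))).mp h4 b' ((G.mem_neighborFinset a' b').mpr hadj)
          simpa [hy, abs_eq_zero] using h7
      intro v hv
      exact hx0 (funext fun b => spread ((hconn.preconnected v b).some) hv)
    have e4 : ∀ p : V × V,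
        x p.1 * signedAdj G σ p.1 p.2 * x p.2 = y p.1 * G.adjMatrix ℝ p.1 p.2 * y p.2 := by
      have e2' : ∑ p : V × V, x p.1 * signedAdj G σ p.1 p.2 * x p.2
          = ∑ p : V × V, y p.1 * G.adjMatrix ℝ p.1 p.2 * y p.2 := by
        rw [← dot_expand, ← dot_expand]
        exact e2
      intro p
      exact (Finset.sum_eq_sum_iff_of_le fun p _ => hterm p).mp e2' p (Finset.mem_univ p)
    set s : V → ℝ := fun v => y v / x v with hs
    have hss : ∀ v, s v * s v = 1 := by
      intro v
      rw [hs]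
      have h8 : y v * y v = x v * x v := abs_mul_abs_self (x v)
      rw [div_mul_div_comm, h8, div_self (mul_ne_zero (hxne v) (hxne v))]
    have hedge : ∀ u v, G.Adj u v → σ u v = s u * s v := by
      intro u v hadj
      have h8 := e4 (u, v)
      simp only at h8
      rw [show signedAdj G σ u v = σ u v from if_pos hadj,
        show (G.adjMatrix ℝ) u v = 1 by simp [hadj]] at h8
      rw [hs]
      rw [div_mul_div_comm, eq_div_iff (mul_ne_zero (hxne u) (hxne v))]
      nlinarith [h8]
    intro v w _
    rw [walkSign_eq_of_switch hss hedge]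
    exact hss v
  · -- balanced → equality
    intro hbal
    obtain ⟨v0⟩ := hne
    set s : V → ℝ := fun u => walkSign σ ((hconn.preconnected v0 u).some) with hsdef
    have hss : ∀ u, s u * s u = 1 := fun u => walkSign_mul_self hσsign _
    have hedge : ∀ u v, G.Adj u v → σ u v = s u * s v := by
      intro u v hadj
      have h1 : walkSign σ (((hconn.preconnected v0 u).some).append
          (SimpleGraph.Walk.cons hadj ((hconn.preconnected v0 v).some).reverse)) = 1 :=
        closed_walkSign hσsymm hσsign hbal _ _ le_rfl
      rw [walkSign_append, walkSign_cons, walkSign_reverse hσsymm] at h1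
      have h2 := hss u
      have h3 := hss v
      simp only [hsdef] at h2 h3 ⊢
      calc σ u v = (walkSign σ ((hconn.preconnected v0 u).some) *
              walkSign σ ((hconn.preconnected v0 u).some)) * σ u v *
              (walkSign σ ((hconn.preconnected v0 v).some) *
              walkSign σ ((hconn.preconnected v0 v).some)) := by rw [h2, h3]; ring
        _ = walkSign σ ((hconn.preconnected v0 u).some) *
              (walkSign σ ((hconn.preconnected v0 u).some) *
              (σ u v * walkSign σ ((hconn.preconnected v0 v).some))) *
              walkSign σ ((hconn.preconnected v0 v).some) := by ring
        _ = walkSign σ ((hconn.preconnected v0 u).some) * 1 *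
              walkSign σ ((hconn.preconnected v0 v).some) := by rw [h1]
        _ = _ := by ring
    have hDD : diagonal s * diagonal s = 1 := by
      rw [diagonal_mul_diagonal]
      ext i j
      simp [Matrix.diagonal_apply, Matrix.one_apply, hss i]
    have hconj : signedAdj G σ = diagonal s * (G.adjMatrix ℝ) * diagonal s := by
      ext u v
      rw [mul_diagonal, diagonal_mul]
      by_cases hadj : G.Adj u v
      · rw [show signedAdj G σ u v = σ u v from if_pos hadj,
          show (G.adjMatrix ℝ) u v = 1 by simp [hadj], hedge u v hadj]
        ring
      · rw [show signedAdj G σ u v = 0 from if_neg hadj,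
          show (G.adjMatrix ℝ) u v = 0 by simp [hadj]]
        ring
    have hspec : spectrum ℝ (signedAdj G σ) = spectrum ℝ (G.adjMatrix ℝ) := by
      rw [hconj]
      exact spectrum.units_conjugate
        (u := ⟨diagonal s, diagonal s, hDD, hDD⟩)
    rw [hcS, hcG, hspec]
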